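/- For w₁ ≠ w₂ in the closed unit disk 𝔹 ⊆ ℝ², let δ(w₁,w₂) = 1 − |‖w₂‖² − ‖w₁‖²| / (2‖w₂ − w₁‖); this is the height of the circular segment among the two Voronoi cells H₁(w₁,w₂), H₂(w₁,w₂) of 𝔹. Then there exists a universal constant C > 0 such that for every λ ∈ (0, 10⁻⁴], vol{(w₁,w₂) ∈ 𝔹 × 𝔹 : w₁ ≠ w₂ and δ(w₁,w₂)⁴ ≤ λ} ≤ C·λ^{7/8}. -/

import Mathlib

open MeasureTheory

noncomputable section

/-- Points of the plane (with the Euclidean norm). -/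
abbrev Pt : Type := EuclideanSpace ℝ (Fin 2)

/-- The closed unit disk in the plane. -/
def unitDisk : Set Pt := Metric.closedBall 0 1

/-- The height `δ(w₁,w₂) = 1 − |‖w₂‖² − ‖w₁‖²| / (2‖w₂ − w₁‖)` of the circular segment
among the two Voronoi cells of `w₁ ≠ w₂` in the closed unit disk. -/
def segHeight (w₁ w₂ : Pt) : ℝ := 1 - |‖w₂‖ ^ 2 - ‖w₁‖ ^ 2| / (2 * ‖w₂ - w₁‖)

/-! ### Auxiliary real-arithmetic lemmas -/

lemma seg_auxA (ε r ρ d t : ℝ) (hε0 : 0 < ε) (hε1 : ε ≤ 1/10)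
    (hr2 : 1 - 2*ε ≤ r) (hr0 : 0 ≤ r) (hd2 : d ≤ 5/2*ε) (hρge : r - d ≤ ρ)
    (h2t : 2*t = ρ^2 + r^2 - d^2) : (1 - 5*ε) * r ≤ t := by
  have hrd : 0 ≤ r - d - 1 + 5*ε := by linarith
  have h0 : 0 ≤ r - d := by linarith
  have hsq : (r-d)^2 ≤ ρ^2 := by nlinarith
  nlinarith [mul_nonneg hr0 hrd]

lemma seg_auxL1 (ε d : ℝ) (hd0 : 0 ≤ d) (hd2 : d ≤ 5/2*ε) : d^2 ≤ (5/2*ε)^2 := by nlinarith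

lemma seg_auxL2 (ε d a : ℝ) (hε0 : 0 < ε) (hb : ((1-ε)*d)^2 ≤ a^2)
    (hdd : d^2 ≤ (5/2*ε)^2) : d^2 - a^2 ≤ 2*ε*(5/2*ε)^2 := by
  nlinarith [mul_nonneg (mul_nonneg hε0.le hε0.le) (sq_nonneg d),
    mul_nonneg hε0.le (sub_nonneg.mpr hdd)]

lemma seg_auxL3 (ε r : ℝ) (hε0 : 0 < ε) (hε1 : ε ≤ 1/10) (hr2 : 1 - 2*ε ≤ r) :
    25/2*ε^3 ≤ 25*ε^3*r^2 := by
  have h7a : (1-2*ε)^2 ≤ r^2 := pow_le_pow_left₀ (by linarith) hr2 2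
  have h7 : (1:ℝ)/2 ≤ r^2 := by nlinarith [sq_nonneg ε]
  nlinarith [mul_nonneg (pow_pos hε0 3).le (by linarith : (0:ℝ) ≤ r^2 - 1/2)]

lemma seg_auxB (ε r ρ d t : ℝ) (hε0 : 0 < ε) (hε1 : ε ≤ 1/10)
    (hr2 : 1 - 2*ε ≤ r) (hr1 : r ≤ 1) (hρ1 : ρ ≤ 1) (hρ0 : 0 ≤ ρ) (hd0 : 0 < d)
    (hb : ((1-ε)*d)^2 ≤ (ρ-r)^2) (habs : (ρ-r)^2 ≤ d^2)
    (hd2 : d ≤ 5/2*ε)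
    (h2t : 2*t = ρ^2 + r^2 - d^2) : ρ^2*r^2 - t^2 ≤ 25 * ε^3 * r^2 := by
  have hid : 4*(ρ^2*r^2 - t^2) = (d^2 - (ρ-r)^2) * ((ρ+r)^2 - d^2) := by
    linear_combination (-(2*t + ρ^2 + r^2 - d^2)) * h2t
  have hF1c : d^2 - (ρ-r)^2 ≤ 2*ε*(5/2*ε)^2 :=
    seg_auxL2 ε d (ρ-r) hε0 hb (seg_auxL1 ε d hd0.le hd2)
  have hF1a : 0 ≤ d^2 - (ρ-r)^2 := by linarith
  have hF2a : 0 ≤ (ρ+r)^2 - d^2 := by nlinarith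
  have hF2b : (ρ+r)^2 - d^2 ≤ 4 := by nlinarith
  have hprod : (d^2 - (ρ-r)^2) * ((ρ+r)^2 - d^2) ≤ (2*ε*(5/2*ε)^2) * 4 :=
    mul_le_mul hF1c hF2b hF2a (by positivity)
  have he : (2*ε*(5/2*ε)^2) * 4 = 50*ε^3 := by ring
  have h6 : ρ^2*r^2 - t^2 ≤ 25/2*ε^3 := by linarith
  linarith [seg_auxL3 ε r hε0 hε1 hr2]

/-! ### The pointwise geometric lemma -/

lemma seg_pointwise (ε : ℝ) (hε0 : 0 < ε) (hε1 : ε ≤ 1/10)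
    (w₁ w₂ : Pt) (h1 : ‖w₁‖ ≤ 1) (h2 : ‖w₂‖ ≤ 1) (hne : w₁ ≠ w₂)
    (hδ4 : segHeight w₁ w₂ ^ 4 ≤ ε ^ 4) :
    1 - 2*ε ≤ ‖w₁‖ ∧ (1 - 5*ε) * ‖w₁‖ ≤ (inner ℝ w₂ w₁ : ℝ) ∧ (inner ℝ w₂ w₁ : ℝ) ≤ ‖w₁‖ ∧
      ‖w₂‖^2 * ‖w₁‖^2 - (inner ℝ w₂ w₁ : ℝ)^2 ≤ 25 * ε^3 * ‖w₁‖^2 := by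
  set r := ‖w₁‖ with hr
  set ρ := ‖w₂‖ with hρ
  set d := ‖w₂ - w₁‖ with hd
  set t := (inner ℝ w₂ w₁ : ℝ) with ht
  have hd0 : 0 < d := by
    rw [hd, norm_pos_iff, sub_ne_zero]; exact hne.symm
  have hρ0 : (0:ℝ) ≤ ρ := norm_nonneg _
  have hr0 : (0:ℝ) ≤ r := norm_nonneg _
  have hinner : d^2 = ρ^2 - 2*t + r^2 := norm_sub_sq_real w₂ w₁
  have habs : |ρ - r| ≤ d := abs_norm_sub_norm_le w₂ w₁
  have htρr : t ≤ ρ * r := real_inner_le_norm w₂ w₁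
  have habs_eq : |ρ^2 - r^2| = |ρ - r| * (ρ + r) := by
    rw [← abs_of_nonneg (by positivity : (0:ℝ) ≤ ρ + r), ← abs_mul]
    ring_nf
  have hδε : segHeight w₁ w₂ ≤ ε := le_of_pow_le_pow_left₀ (by norm_num) hε0.le hδ4
  have hkey : 2*d*(1-ε) ≤ |ρ^2 - r^2| := by
    have h' : 1 - ε ≤ |ρ^2 - r^2| / (2*d) := by
      have hseg : segHeight w₁ w₂ = 1 - |ρ^2 - r^2| / (2*d) := rfl
      linarith [hseg ▸ hδε]
    have := (le_div_iff₀ (by linarith : (0:ℝ) < 2*d)).mp h'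
    linarith
  have hsum : 2*(1-ε) ≤ ρ + r := by
    have h1' : |ρ - r| * (ρ + r) ≤ d * (ρ + r) :=
      mul_le_mul_of_nonneg_right habs (by positivity)
    nlinarith [hkey, habs_eq]
  have hr2 : 1 - 2*ε ≤ r := by linarith
  have hρ2 : 1 - 2*ε ≤ ρ := by linarith
  have habs2 : (1-ε)*d ≤ |ρ - r| := by
    have h1' : |ρ - r| * (ρ + r) ≤ |ρ - r| * 2 :=
      mul_le_mul_of_nonneg_left (by linarith) (abs_nonneg _)
    nlinarith [hkey, habs_eq]
  have habs3 : |ρ - r| ≤ 2*ε := abs_le.mpr ⟨by linarith, by linarith⟩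
  have hd2 : d ≤ 5/2*ε := by nlinarith [habs2, abs_nonneg (ρ - r)]
  have h2t : 2*t = ρ^2 + r^2 - d^2 := by linarith
  have hρge : r - d ≤ ρ := by linarith [(abs_le.mp habs).1]
  have hb : ((1-ε)*d)^2 ≤ (ρ-r)^2 := by
    rw [← sq_abs (ρ - r)]
    exact pow_le_pow_left₀ (by nlinarith) habs2 2
  have habssq : (ρ-r)^2 ≤ d^2 := by
    rw [← sq_abs (ρ - r)]
    exact pow_le_pow_left₀ (abs_nonneg _) habs 2
  exact ⟨hr2, seg_auxA ε r ρ d t hε0 hε1 hr2 hr0 hd2 hρge h2t, by nlinarith,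
    seg_auxB ε r ρ d t hε0 hε1 hr2 h1 h2 hρ0 hd0 hb habssq hd2 h2t⟩

/-! ### The volume of a slice -/

lemma slice_volume (ε h3 : ℝ) (hε0 : 0 < ε) (hh0 : 0 ≤ h3) (hh2 : h3^2 = 25*ε^3)
    (w : Pt) (hw : w ≠ 0) :
    volume {v : Pt | (1 - 5*ε) * ‖w‖ ≤ (inner ℝ v w : ℝ) ∧ (inner ℝ v w : ℝ) ≤ ‖w‖ ∧
        ‖v‖^2 * ‖w‖^2 - (inner ℝ v w : ℝ)^2 ≤ 25*ε^3 * ‖w‖^2}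
      ≤ ENNReal.ofReal (5*ε) * ENNReal.ofReal (2*h3) := by
  have hr : 0 < ‖w‖ := norm_pos_iff.mpr hw
  set u : Pt := ‖w‖⁻¹ • w with hu_def
  have hu : ‖u‖ = 1 := norm_smul_inv_norm hw
  have hon : Orthonormal ℝ (({0} : Set (Fin 2)).restrict (fun _ : Fin 2 => u)) := by
    constructor
    · intro i; exact hu
    · intro i j hij
      exact absurd (Subtype.ext ((Set.mem_singleton_iff.mp i.2).trans
        (Set.mem_singleton_iff.mp j.2).symm)) hij
  obtain ⟨b, hb⟩ := hon.exists_orthonormalBasis_extension_of_card_eq (by simp)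
  have hb0 : b 0 = u := hb 0 rfl
  set I' : Fin 2 → Set ℝ := ![Set.Icc (1-5*ε) 1, Set.Icc (-h3) h3] with hI'
  have hsub : {v : Pt | (1 - 5*ε) * ‖w‖ ≤ (inner ℝ v w : ℝ) ∧ (inner ℝ v w : ℝ) ≤ ‖w‖ ∧
        ‖v‖^2 * ‖w‖^2 - (inner ℝ v w : ℝ)^2 ≤ 25*ε^3 * ‖w‖^2}
      ⊆ b.repr ⁻¹' ((MeasurableEquiv.toLp 2 (Fin 2 → ℝ)).symm ⁻¹' (Set.univ.pi I')) := by
    rintro v ⟨hv1, hv2, hv3⟩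
    have hz0 : b.repr v 0 = ‖w‖⁻¹ * (inner ℝ v w : ℝ) := by
      rw [b.repr_apply_apply, hb0, hu_def, real_inner_smul_left, real_inner_comm]
    have hnv : ‖v‖^2 = (b.repr v 0)^2 + (b.repr v 1)^2 := by
      have h1 : ‖b.repr v‖ = ‖v‖ := b.repr.norm_map v
      have h2 : ‖b.repr v‖^2 = ∑ i : Fin 2, (b.repr v i)^2 := by
        rw [EuclideanSpace.norm_eq, Real.sq_sqrt (by positivity)]
        simp [sq_abs]
      rw [← h1, h2, Fin.sum_univ_two]
    set z0 := b.repr v 0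
    set z1 := b.repr v 1
    have ht : (inner ℝ v w : ℝ) = ‖w‖ * z0 := by
      rw [hz0]; field_simp
    have hz0a : 1 - 5*ε ≤ z0 := by
      rw [ht] at hv1
      nlinarith
    have hz0b : z0 ≤ 1 := by
      rw [ht] at hv2
      nlinarith
    have hz1 : z1^2 ≤ h3^2 := by
      rw [ht, hnv] at hv3
      have h9 : z1^2*‖w‖^2 ≤ 25*ε^3*‖w‖^2 := by nlinarith [hv3]
      rw [hh2]
      exact le_of_mul_le_mul_right (by linarith) (pow_pos hr 2)
    have hz1' : |z1| ≤ h3 := by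
      refine le_of_pow_le_pow_left₀ (two_ne_zero) hh0 ?_
      rwa [sq_abs]
    intro i _
    fin_cases i
    · exact ⟨hz0a, hz0b⟩
    · exact abs_le.mp hz1'
  calc volume {v : Pt | (1 - 5*ε) * ‖w‖ ≤ (inner ℝ v w : ℝ) ∧ (inner ℝ v w : ℝ) ≤ ‖w‖ ∧
        ‖v‖^2 * ‖w‖^2 - (inner ℝ v w : ℝ)^2 ≤ 25*ε^3 * ‖w‖^2}
      ≤ volume (b.repr ⁻¹' ((MeasurableEquiv.toLp 2 (Fin 2 → ℝ)).symm ⁻¹' (Set.univ.pi I'))) :=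
        measure_mono hsub
    _ = volume ((MeasurableEquiv.toLp 2 (Fin 2 → ℝ)).symm ⁻¹' (Set.univ.pi I')) := by
        refine b.measurePreserving_repr.measure_preimage ?_
        exact ((MeasurableSet.univ_pi (by
          intro i; fin_cases i <;> exact measurableSet_Icc)).preimage
          (MeasurableEquiv.toLp 2 (Fin 2 → ℝ)).symm.measurable).nullMeasurableSet
    _ = volume (Set.univ.pi I') := by
        refine (EuclideanSpace.volume_preserving_symm_measurableEquiv_toLp (Fin 2)).measure_preimage ?_
        exact (MeasurableSet.univ_pi (by
          intro i; fin_cases i <;> exact measurableSet_Icc)).nullMeasurableSet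
    _ = ∏ i : Fin 2, volume (I' i) := volume_pi_pi I'
    _ = ENNReal.ofReal (5*ε) * ENNReal.ofReal (2*h3) := by
        rw [Fin.prod_univ_two, hI']
        simp only [Matrix.cons_val_zero, Matrix.cons_val_one, Matrix.head_cons, Real.volume_Icc]
        congr 1
        · congr 1; ring
        · congr 1; ring

/-- There is a universal constant `C > 0` such that for every
`λ ∈ (0, 10⁻⁴]`,
`vol {(w₁,w₂) ∈ 𝔹 × 𝔹 : w₁ ≠ w₂ and δ(w₁,w₂)⁴ ≤ λ} ≤ C·λ^{7/8}`. -/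
theorem volume_small_segment_height_le :
    ∃ C : ℝ, 0 < C ∧ ∀ lam : ℝ, 0 < lam → lam ≤ 1 / 10 ^ 4 →
      volume {p : Pt × Pt | p.1 ∈ unitDisk ∧ p.2 ∈ unitDisk ∧ p.1 ≠ p.2 ∧
          segHeight p.1 p.2 ^ 4 ≤ lam}
        ≤ ENNReal.ofReal (C * lam ^ ((7 : ℝ) / 8)) := by
  refine ⟨800, by norm_num, ?_⟩
  intro lam hlam hlam'
  set η := lam ^ ((1:ℝ)/8) with hηdef
  have hη0 : 0 < η := Real.rpow_pos_of_pos hlam _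
  have hη8 : η ^ (8:ℕ) = lam := by
    rw [hηdef, ← Real.rpow_natCast (lam ^ ((1:ℝ)/8)) 8, ← Real.rpow_mul hlam.le]
    norm_num
  have hη7 : η ^ (7:ℕ) = lam ^ ((7:ℝ)/8) := by
    rw [hηdef, ← Real.rpow_natCast (lam ^ ((1:ℝ)/8)) 7, ← Real.rpow_mul hlam.le]
    norm_num
  set ε := η^2 with hεdef
  have hε0 : 0 < ε := pow_pos hη0 2
  have h4 : ε^4 = lam := by rw [hεdef, ← pow_mul]; exact hη8
  have hε1 : ε ≤ 1/10 := by
    refine le_of_pow_le_pow_left₀ (n := 4) (by norm_num) (by norm_num) ?_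
    rw [h4]
    norm_num at hlam' ⊢
    linarith
  set h3 := 5*η^3 with h3def
  have hh0 : 0 ≤ h3 := by positivity
  have hh2 : h3^2 = 25*ε^3 := by rw [h3def, hεdef]; ring
  set K := ENNReal.ofReal (5*ε) * ENNReal.ofReal (2*h3) with hK
  set Ann := Metric.closedBall (0:Pt) 1 \ Metric.ball 0 (1-2*ε) with hAnn
  set B := {p : Pt × Pt | (1-2*ε ≤ ‖p.1‖ ∧ ‖p.1‖ ≤ 1) ∧
      ((1-5*ε)*‖p.1‖ ≤ (inner ℝ p.2 p.1 : ℝ) ∧ (inner ℝ p.2 p.1 : ℝ) ≤ ‖p.1‖ ∧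
        ‖p.2‖^2*‖p.1‖^2 - (inner ℝ p.2 p.1 : ℝ)^2 ≤ 25*ε^3*‖p.1‖^2)} with hB
  have c1 : Continuous fun p : Pt × Pt => ‖p.1‖ := continuous_fst.norm
  have c2 : Continuous fun p : Pt × Pt => ‖p.2‖ := continuous_snd.norm
  have c3 : Continuous fun p : Pt × Pt => (inner ℝ p.2 p.1 : ℝ) :=
    continuous_inner.comp (continuous_snd.prodMk continuous_fst)
  have hBm : MeasurableSet B := by
    rw [hB]
    simp only [Set.setOf_and]
    refine (MeasurableSet.inter ?_ ?_).inter
      (MeasurableSet.inter ?_ (MeasurableSet.inter ?_ ?_))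
    · exact measurableSet_le measurable_const c1.measurable
    · exact measurableSet_le c1.measurable measurable_const
    · exact measurableSet_le (measurable_const.mul c1.measurable) c3.measurable
    · exact measurableSet_le c3.measurable c1.measurable
    · exact measurableSet_le
        (((c2.measurable.pow_const 2).mul (c1.measurable.pow_const 2)).sub
          (c3.measurable.pow_const 2))
        (measurable_const.mul (c1.measurable.pow_const 2))
  have hsub : {p : Pt × Pt | p.1 ∈ unitDisk ∧ p.2 ∈ unitDisk ∧ p.1 ≠ p.2 ∧
      segHeight p.1 p.2 ^ 4 ≤ lam} ⊆ B := by
    rintro ⟨w₁, w₂⟩ ⟨hw1, hw2, hne, hδ⟩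
    have hw1' : ‖w₁‖ ≤ 1 := by
      simpa [unitDisk, mem_closedBall_zero_iff] using hw1
    have hw2' : ‖w₂‖ ≤ 1 := by
      simpa [unitDisk, mem_closedBall_zero_iff] using hw2
    have := seg_pointwise ε hε0 hε1 w₁ w₂ hw1' hw2' hne (by rw [h4]; exact hδ)
    exact ⟨⟨this.1, hw1'⟩, this.2⟩
  have haux : ∀ x : Pt, volume (Prod.mk x ⁻¹' B) ≤ Ann.indicator (fun _ => K) x := by
    intro x
    by_cases hx : x ∈ Ann
    · rw [Set.indicator_of_mem hx]
      have hx1 : ‖x‖ ≤ 1 := mem_closedBall_zero_iff.mp hx.1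
      have hx2 : 1 - 2*ε ≤ ‖x‖ := by
        have h := hx.2
        rw [Metric.mem_ball, dist_zero_right] at h
        exact not_lt.mp h
      have hx0 : x ≠ 0 := by
        intro h
        rw [h, norm_zero] at hx2
        linarith
      refine le_trans (measure_mono ?_) (slice_volume ε h3 hε0 hh0 hh2 x hx0)
      intro v hv
      exact hv.2
    · rw [Set.indicator_of_notMem hx]
      have hemp : Prod.mk x ⁻¹' B = ∅ := by
        ext v
        simp only [Set.mem_preimage, Set.mem_empty_iff_false, iff_false]
        intro hv
        exact hx ⟨mem_closedBall_zero_iff.mpr hv.1.2, by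
          rw [Metric.mem_ball, dist_zero_right]
          exact not_lt.mpr hv.1.1⟩
      simp [hemp]
  have hann : volume Ann ≤ ENNReal.ofReal (16*ε) := by
    rw [hAnn, measure_diff
      (Metric.ball_subset_closedBall.trans (Metric.closedBall_subset_closedBall (by linarith)))
      measurableSet_ball.nullMeasurableSet measure_ball_lt_top.ne]
    rw [EuclideanSpace.volume_closedBall, EuclideanSpace.volume_ball]
    simp only [Fintype.card_fin]
    have hgam : Real.Gamma ((2:ℕ) / 2 + 1) = 1 := by
      norm_num [Real.Gamma_two]
    have hsq : Real.sqrt Real.pi ^ (2:ℕ) = Real.pi := Real.sq_sqrt Real.pi_pos.le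
    rw [hgam, hsq]
    simp only [div_one]
    rw [ENNReal.ofReal_one, one_pow, one_mul,
      ← ENNReal.ofReal_pow (by linarith : (0:ℝ) ≤ 1 - 2*ε),
      ← ENNReal.ofReal_mul (by positivity)]
    rw [← ENNReal.ofReal_sub _ (by positivity)]
    refine ENNReal.ofReal_le_ofReal ?_
    nlinarith [Real.pi_pos, Real.pi_le_four,
      mul_nonneg (mul_nonneg Real.pi_pos.le hε0.le) hε0.le,
      mul_le_mul_of_nonneg_right Real.pi_le_four hε0.le]
  calc volume {p : Pt × Pt | p.1 ∈ unitDisk ∧ p.2 ∈ unitDisk ∧ p.1 ≠ p.2 ∧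
          segHeight p.1 p.2 ^ 4 ≤ lam}
      ≤ volume B := measure_mono hsub
    _ = ∫⁻ x, volume (Prod.mk x ⁻¹' B) := by
        rw [Measure.volume_eq_prod, Measure.prod_apply hBm]
    _ ≤ ∫⁻ x, Ann.indicator (fun _ => K) x := lintegral_mono haux
    _ = K * volume Ann := lintegral_indicator_const
        (measurableSet_closedBall.diff measurableSet_ball) K
    _ ≤ K * ENNReal.ofReal (16*ε) := mul_le_mul' le_rfl hann
    _ = ENNReal.ofReal (800 * lam ^ ((7:ℝ)/8)) := by
        rw [hK, ← ENNReal.ofReal_mul (by positivity), ← ENNReal.ofReal_mul (by positivity)]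
        congr 1
        have : 5*ε*(2*h3)*(16*ε) = 800 * η^(7:ℕ) := by rw [hεdef, h3def]; ring
        rw [this, hη7]

end
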